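/- For every graph G with n vertices, col_n(G) = tw(G) + 1, where tw(G) is the treewidth of G. -/

import Mathlib

open SimpleGraph

variable {V : Type*}

/-- Weakly r-reachable vertices from `v` w.r.t. order `L`. -/
def WReach (G : SimpleGraph V) (L : V ↪ ℕ) (r : ℕ) (v : V) : Set V :=
  {u | ∃ p : G.Walk v u, p.IsPath ∧ p.length ≤ r ∧ ∀ w ∈ p.support, L u ≤ L w}

/-- Strongly r-reachable vertices from `v` w.r.t. order `L`. -/
def SReach (G : SimpleGraph V) (L : V ↪ ℕ) (r : ℕ) (v : V) : Set V :=
  {u | ∃ p : G.Walk v u, p.IsPath ∧ p.length ≤ r ∧ L u ≤ L v ∧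
    ∀ w ∈ p.support, w ≠ v → w ≠ u → L v < L w}

/-- r-admissibility of a vertex `v` w.r.t. order `L`. -/
noncomputable def admAt (G : SimpleGraph V) (L : V ↪ ℕ) (r : ℕ) (v : V) : ℕ :=
  sSup {k | ∃ (e : Fin k → V) (p : ∀ i, G.Walk v (e i)),
    ∀ i, (p i).IsPath ∧ (p i).length ≤ r ∧ L (e i) ≤ L v ∧
      ∀ j, i ≠ j → {w | w ∈ (p i).support} ∩ {w | w ∈ (p j).support} = {v}}

/-- Weak r-colouring number. -/
noncomputable def wcol (G : SimpleGraph V) (r : ℕ) : ℕ :=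
  sInf {k | ∃ L : V ↪ ℕ, ∀ v, (WReach G L r v).ncard ≤ k}

/-- r-colouring number. -/
noncomputable def gcol (G : SimpleGraph V) (r : ℕ) : ℕ :=
  sInf {k | ∃ L : V ↪ ℕ, ∀ v, (SReach G L r v).ncard ≤ k}

/-- r-admissibility number. -/
noncomputable def adm (G : SimpleGraph V) (r : ℕ) : ℕ :=
  sInf {k | ∃ L : V ↪ ℕ, ∀ v, admAt G L r v ≤ k}
/-- `(T, bag)` is a tree decomposition of `G`. -/
def IsTreeDecomp (G : SimpleGraph V) {β : Type} (T : SimpleGraph β) (bag : β → Set V) : Prop :=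
  T.IsTree ∧ (∀ v : V, ∃ t, v ∈ bag t) ∧
  (∀ ⦃u v⦄, G.Adj u v → ∃ t, u ∈ bag t ∧ v ∈ bag t) ∧
  (∀ (v : V) (t₁ t₂ : β), v ∈ bag t₁ → v ∈ bag t₂ →
    ∀ (p : T.Walk t₁ t₂), p.IsPath → ∀ t ∈ p.support, v ∈ bag t)

/-- `G` has treewidth at most `k`. -/
def HasTreewidthLE (G : SimpleGraph V) (k : ℕ) : Prop :=
  ∃ (β : Type) (T : SimpleGraph β) (bag : β → Set V),
    IsTreeDecomp G T bag ∧ ∀ t, (bag t).ncard ≤ k + 1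

/-- The treewidth of `G`. -/
noncomputable def treewidth (G : SimpleGraph V) : ℕ := sInf {k | HasTreewidthLE G k}

open SimpleGraph Walk

variable {β : Type*} {T : SimpleGraph β}

lemma walk_min_isPath (hT : T.IsTree) {s t : β} (q : T.Walk s t)
    (hq : q.length = T.dist s t) : q.IsPath := by
  classical
  have h1 : T.dist s t ≤ q.bypass.length := dist_le _
  have h2 : q.bypass.length ≤ q.length := length_bypass_le q
  have h3 : q.bypass = q := bypass_eq_self_of_length_le q (by omega)
  rw [← h3]; exact bypass_isPath q

/-- In a tree, any path between two vertices has length equal to the distance. -/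
lemma tree_path_length (hT : T.IsTree) {s t : β} (p : T.Walk s t) (hp : p.IsPath) :
    p.length = T.dist s t := by
  obtain ⟨q, hq⟩ := hT.isConnected.exists_walk_length_eq_dist s t
  have hqp : q.IsPath := walk_min_isPath hT q hq
  have h := hT.IsAcyclic.path_unique ⟨p, hp⟩ ⟨q, hqp⟩
  have h2 : p = q := congrArg Subtype.val h
  rw [h2, hq]

lemma exists_path_length_dist (hT : T.IsTree) (s t : β) :
    ∃ p : T.Walk s t, p.IsPath ∧ p.length = T.dist s t := by
  obtain ⟨q, hq⟩ := hT.isConnected.exists_walk_length_eq_dist s t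
  exact ⟨q, walk_min_isPath hT q hq, hq⟩

lemma tree_mem_support_iff (hT : T.IsTree) {s t : β} (p : T.Walk s t) (hp : p.IsPath) (x : β) :
    x ∈ p.support ↔ T.dist s x + T.dist x t = T.dist s t := by
  classical
  constructor
  · intro hx
    have h1 : (p.takeUntil x hx).IsPath := hp.takeUntil hx
    have h2 : (p.dropUntil x hx).IsPath := hp.dropUntil hx
    have e1 := tree_path_length hT _ h1
    have e2 := tree_path_length hT _ h2
    have e3 : (p.takeUntil x hx).length + (p.dropUntil x hx).length = p.length := by
      rw [← length_append, take_spec]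
    have e4 := tree_path_length hT p hp
    omega
  · intro hx
    obtain ⟨q1, hq1, hl1⟩ := exists_path_length_dist hT s x
    obtain ⟨q2, hq2, hl2⟩ := exists_path_length_dist hT x t
    set q : T.Walk s t := q1.append q2 with hq
    have hlen : q.length = T.dist s t := by rw [hq, length_append]; omega
    have hqpath : q.IsPath := walk_min_isPath hT q hlen
    have h := hT.IsAcyclic.path_unique ⟨p, hp⟩ ⟨q, hqpath⟩
    have hpq : p = q := congrArg Subtype.val h
    rw [hpq, hq, mem_support_append_iff]
    left; exact q1.end_mem_support
open SimpleGraph Walk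

variable {β : Type*} {T : SimpleGraph β}

/-- `a` is an ancestor of `b` w.r.t. root `r`. -/
def Anc (T : SimpleGraph β) (r a b : β) : Prop :=
  T.dist r a + T.dist a b = T.dist r b

lemma anc_refl (T : SimpleGraph β) (hT : T.IsTree) (r a : β) : Anc T r a a := by
  have : T.dist a a = 0 := by simp
  unfold Anc; omega

lemma anc_depth_le {r a b : β} (h : Anc T r a b) : T.dist r a ≤ T.dist r b := by
  unfold Anc at h; omega

lemma anc_eq_of_depth_le (hT : T.IsTree) {r a b : β} (h : Anc T r a b)
    (hd : T.dist r b ≤ T.dist r a) : a = b := by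
  unfold Anc at h
  have : T.dist a b = 0 := by omega
  exact (hT.isConnected.dist_eq_zero_iff).mp this

lemma anc_trans (hT : T.IsTree) {r a b c : β} (h1 : Anc T r a b) (h2 : Anc T r b c) :
    Anc T r a c := by
  unfold Anc at *
  have t1 : T.dist a c ≤ T.dist a b + T.dist b c := hT.isConnected.dist_triangle
  have t2 : T.dist r c ≤ T.dist r a + T.dist a c := hT.isConnected.dist_triangle
  omega

/-- Two ancestors of the same vertex are comparable. -/
lemma anc_total (hT : T.IsTree) {r a b c : β} (h1 : Anc T r a c) (h2 : Anc T r b c) :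
    Anc T r a b ∨ Anc T r b a := by
  classical
  obtain ⟨P, hP, hPl⟩ := exists_path_length_dist hT r c
  have ha : a ∈ P.support := (tree_mem_support_iff hT P hP a).mpr h1
  have hb : b ∈ P.support := (tree_mem_support_iff hT P hP b).mpr h2
  have hsplit : b ∈ (P.takeUntil a ha).support ∨ b ∈ (P.dropUntil a ha).support := by
    have := P.take_spec ha
    rw [← this, mem_support_append_iff] at hb
    exact hb
  rcases hsplit with hb1 | hb2
  · right
    have h3 := (tree_mem_support_iff hT _ (hP.takeUntil ha) b).mp hb1
    unfold Anc at *
    omega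
  · left
    have h3 := (tree_mem_support_iff hT _ (hP.dropUntil ha) b).mp hb2
    unfold Anc at *
    omega

/-- The minimum-depth element of a path-closed set is an ancestor of every element. -/
lemma anc_min (hT : T.IsTree) {r : β} {S : Set β}
    (hcl : ∀ t₁ t₂, t₁ ∈ S → t₂ ∈ S → ∀ (p : T.Walk t₁ t₂), p.IsPath → ∀ t ∈ p.support, t ∈ S)
    {m : β} (hm : m ∈ S) (hmin : ∀ s ∈ S, T.dist r m ≤ T.dist r s)
    {s : β} (hs : s ∈ S) : Anc T r m s := by
  classical
  obtain ⟨W, hW, hWl⟩ := exists_path_length_dist hT m r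
  obtain ⟨P, hP, hPl⟩ := exists_path_length_dist hT r s
  -- choose c on both W and P minimizing dist m c
  set K : Set ℕ := {k | ∃ x, x ∈ W.support ∧ x ∈ P.support ∧ T.dist m x = k} with hK
  have hKne : K.Nonempty := ⟨T.dist m r, r, W.end_mem_support, P.start_mem_support, rfl⟩
  obtain ⟨c, hcW, hcP, hcd⟩ : ∃ x, x ∈ W.support ∧ x ∈ P.support ∧ T.dist m x = sInf K :=
    Nat.sInf_mem hKne
  have hcmin : ∀ x, x ∈ W.support → x ∈ P.support → T.dist m c ≤ T.dist m x := by
    intro x h1 h2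
    rw [hcd]; exact Nat.sInf_le ⟨x, h1, h2, rfl⟩
  -- build the path from m to s through c
  set q : T.Walk m s := (W.takeUntil c hcW).append (P.dropUntil c hcP) with hq
  have htk : (W.takeUntil c hcW).IsPath := hW.takeUntil hcW
  have hdr : (P.dropUntil c hcP).IsPath := hP.dropUntil hcP
  have hqpath : q.IsPath := by
    rw [hq, isPath_def, support_append]
    apply List.Nodup.append (htk.support_nodup)
    · have := hdr.support_nodup
      rw [support_eq_cons (P.dropUntil c hcP)] at this
      exact this.of_cons
    · intro x hx1 hx2
      have hxW : x ∈ W.support := support_takeUntil_subset W hcW hx1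
      have hxP : x ∈ P.support := support_dropUntil_subset P hcP (List.mem_of_mem_tail hx2)
      have hle := hcmin x hxW hxP
      have hxc := (tree_mem_support_iff hT _ htk x).mp hx1
      -- dist m x + dist x c = dist m c, so dist x c = 0, x = c
      have : T.dist x c = 0 := by omega
      have hxceq : x = c := (hT.isConnected.dist_eq_zero_iff).mp this
      -- but c is not in the tail of the dropUntil support
      have hn := hdr.support_nodup
      rw [support_eq_cons (P.dropUntil c hcP)] at hn
      rw [hxceq] at hx2
      exact (List.nodup_cons.mp hn).1 hx2
  have hcq : c ∈ q.support := by
    rw [hq, mem_support_append_iff]; left; exact Walk.end_mem_support _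
  have e4 := (tree_mem_support_iff hT q hqpath c).mp hcq
  have hcS : c ∈ S := hcl m s hm hs q hqpath c hcq
  have e5 := hmin c hcS
  have e6 := (tree_mem_support_iff hT P hP c).mp hcP
  have e7 := (tree_mem_support_iff hT W hW c).mp hcW
  have d1 : T.dist m r = T.dist r m := dist_comm ..
  have d2 : T.dist c r = T.dist r c := dist_comm ..
  have d3 : T.dist m c = T.dist c m := dist_comm ..
  unfold Anc
  have t2 : T.dist r s ≤ T.dist r m + T.dist m s := hT.isConnected.dist_triangle
  omega
section ParentTree
open Walk
variable {α : Type} [Fintype α] [DecidableEq α]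

def parTree (par : α → α) : SimpleGraph α where
  Adj a b := a ≠ b ∧ (par a = b ∨ par b = a)
  symm := ⟨fun a b ⟨h1, h2⟩ => ⟨h1.symm, h2.symm⟩⟩
  loopless := ⟨fun a h => h.1 rfl⟩

lemma parTree_adj_parent (par : α → α) {a : α} (h : par a ≠ a) :
    (parTree par).Adj a (par a) := ⟨fun he => h he.symm, Or.inl rfl⟩

lemma parTree_isTree (par : α → α) (ℓ : α → ℕ) (b₀ : α) (hb₀ : par b₀ = b₀)
    (hpar : ∀ b, b ≠ b₀ → ℓ (par b) < ℓ b) : (parTree par).IsTree := by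
  constructor
  · -- connected
    have hreach : ∀ m (a : α), ℓ a ≤ m → (parTree par).Reachable a b₀ := by
      intro m
      induction m with
      | zero =>
        intro a ha
        by_cases h : a = b₀
        · exact h ▸ Reachable.refl a
        · exact absurd (hpar a h) (by omega)
      | succ m ih =>
        intro a ha
        by_cases h : a = b₀
        · exact h ▸ Reachable.refl a
        · have hlt := hpar a h
          have hadj : (parTree par).Adj a (par a) :=
            parTree_adj_parent par (fun he => by rw [he] at hlt; omega)
          exact hadj.reachable.trans (ih (par a) (by omega))
    haveI : Nonempty α := ⟨b₀⟩
    exact ⟨fun a b => (hreach (ℓ a) a le_rfl).trans (hreach (ℓ b) b le_rfl).symm⟩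
  · -- acyclic
    intro a c hc
    have hne : c.support.toFinset.Nonempty :=
      ⟨a, List.mem_toFinset.mpr c.start_mem_support⟩
    obtain ⟨x, hxmem, hxmax⟩ := Finset.exists_max_image c.support.toFinset ℓ hne
    rw [List.mem_toFinset] at hxmem
    have hmax : ∀ y ∈ c.support, ℓ y ≤ ℓ x := fun y hy => hxmax y (List.mem_toFinset.mpr hy)
    have hcyc : (c.rotate x hxmem).IsCycle := hc.rotate hxmem
    have hsupp : ∀ y ∈ (c.rotate x hxmem).support, ℓ y ≤ ℓ x := by
      intro y hy
      rw [support_eq_cons] at hy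
      rcases List.mem_cons.mp hy with hy | hy
      · exact hy ▸ le_rfl
      · have hperm := support_rotate c x hxmem
        exact hmax y (List.mem_of_mem_tail (hperm.mem_iff.mp hy))
    -- analyze the rotated cycle
    generalize hgen : c.rotate x hxmem = c₂ at hcyc hsupp
    clear hgen
    cases c₂ with
    | nil => exact hcyc.ne_nil rfl
    | @cons _ y _ hadj q =>
      -- first edge x-y, so par x = y
      have hyle : ℓ y ≤ ℓ x := hsupp y (by rw [support_cons]; exact List.mem_cons_of_mem _ q.start_mem_support)
      have hpxy : par x = y := by
        rcases hadj.2 with h | h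
        · exact h
        · by_cases hy : y = b₀
          · exact absurd (by rw [hy] at h ⊢; rw [hb₀] at h; exact h.symm) hadj.1
          · have := hpar y hy
            rw [h] at this
            omega
      -- last edge z-x, so par x = z
      obtain ⟨z, q', hadj', heq⟩ := exists_cons_eq_concat hadj q
      have hzmem : z ∈ (Walk.cons hadj q).support := by
        rw [heq, support_concat]
        exact List.mem_append_left _ q'.end_mem_support
      have hzle : ℓ z ≤ ℓ x := hsupp z hzmem
      have hpxz : par x = z := by
        rcases hadj'.2 with h | h
        · by_cases hz : z = b₀
          · rw [hz, hb₀] at h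
            exact absurd h (hz ▸ hadj'.1)
          · have := hpar z hz
            rw [h] at this
            omega
        · exact h
      have hyz : y = z := hpxy ▸ hpxz
      -- edge duplication
      have hedges : s(x, y) :: q.edges = q'.edges ++ [s(z, x)] := by
        have h1 := congrArg Walk.edges heq
        rwa [edges_cons, edges_concat, List.concat_eq_append] at h1
      have hq'len : q'.edges ≠ [] := by
        have h3 := hcyc.three_le_length
        have hl1 : (Walk.cons hadj q).length = q'.length + 1 := by
          rw [heq, length_concat]
        rw [length_cons] at hl1
        have hl2 : q'.edges.length = q'.length := q'.length_edges
        intro hnil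
        rw [hnil] at hl2
        simp at hl2
        rw [length_cons] at h3
        omega
      obtain ⟨e0, t, ht⟩ := List.exists_cons_of_ne_nil hq'len
      rw [ht] at hedges
      simp only [List.cons_append, List.cons.injEq] at hedges
      have hmem2 : s(x, y) ∈ q.edges := by
        rw [hedges.2]
        subst hyz
        exact List.mem_append_right _ (List.mem_singleton.mpr Sym2.eq_swap)
      have hnodup := hcyc.isCircuit.isTrail.edges_nodup
      rw [edges_cons] at hnodup
      exact (List.nodup_cons.mp hnodup).1 hmem2
end ParentTree
section Dir2
open Walk
variable {V : Type*}

lemma gcol_le_of_decomp [Fintype V] [Nonempty V] (G : SimpleGraph V) (k : ℕ)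
    (h : HasTreewidthLE G k) :
    ∃ L : V ↪ ℕ, ∀ v, (SReach G L (Fintype.card V) v).ncard ≤ k + 1 := by
  classical
  obtain ⟨β, T, bag, ⟨hT, hcov, hedge, hcoh⟩, hw⟩ := h
  have hβ : Nonempty β := ⟨(hcov (Classical.arbitrary V)).choose⟩
  obtain ⟨r⟩ := hβ
  -- the top bag of each vertex
  have htop : ∀ v : V, ∃ t, v ∈ bag t ∧ ∀ s, v ∈ bag s → T.dist r t ≤ T.dist r s := by
    intro v
    set K : Set ℕ := {k | ∃ t, v ∈ bag t ∧ T.dist r t = k} with hK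
    have hKne : K.Nonempty := ⟨T.dist r (hcov v).choose, _, (hcov v).choose_spec, rfl⟩
    obtain ⟨t, ht, htd⟩ : ∃ t, v ∈ bag t ∧ T.dist r t = sInf K := Nat.sInf_mem hKne
    exact ⟨t, ht, fun s hs => htd ▸ Nat.sInf_le ⟨s, hs, rfl⟩⟩
  choose top htop1 htop2 using htop
  set D : V → ℕ := fun v => T.dist r (top v) with hD
  have anc_top : ∀ (v : V) (s : β), v ∈ bag s → Anc T r (top v) s := by
    intro v s hs
    exact anc_min hT (fun t₁ t₂ h1 h2 p hp t ht => hcoh v t₁ t₂ h1 h2 p hp t ht)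
      (htop1 v) (fun s hs => htop2 v s hs) hs
  set n := Fintype.card V with hn
  set e := Fintype.equivFin V with he
  have hmono : ∀ a b : V, D a < D b → D a * n + (e a : ℕ) < D b * n + (e b : ℕ) := by
    intro a b hab
    have h1 : (e a : ℕ) < n := (e a).isLt
    calc D a * n + (e a : ℕ) < (D a + 1) * n := by rw [Nat.add_mul, Nat.one_mul]; omega
    _ ≤ D b * n := Nat.mul_le_mul_right n hab
    _ ≤ D b * n + (e b : ℕ) := Nat.le_add_right _ _
  set L : V ↪ ℕ := ⟨fun v => D v * n + (e v : ℕ), by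
    intro a b hab
    simp only at hab
    have hD' : D a = D b := by
      rcases Nat.lt_trichotomy (D a) (D b) with h | h | h
      · exact absurd hab (Nat.ne_of_lt (hmono a b h))
      · exact h
      · exact absurd hab.symm (Nat.ne_of_lt (hmono b a h))
    rw [hD'] at hab
    have : (e a : ℕ) = (e b : ℕ) := by omega
    exact e.injective (Fin.val_injective this)⟩ with hL
  have hDle : ∀ a b : V, L a ≤ L b → D a ≤ D b := by
    intro a b hab
    by_contra hc
    exact absurd hab (not_le.mpr (hmono b a (not_le.mp hc)))
  refine ⟨L, fun v => ?_⟩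
  have hsub : SReach G L n v ⊆ bag (top v) := by
    rintro u ⟨p, hp, hlen, hLu, hint⟩
    have hDu : D u ≤ D v := hDle u v hLu
    -- main induction along the walk
    have key : ∀ (x z : V) (q : G.Walk x z), (∀ w ∈ q.support, w ≠ z → D v ≤ D w) →
        Anc T r (top v) (top x) → (Anc T r (top v) (top z) ∨ z ∈ bag (top v)) := by
      intro x z q
      induction q with
      | nil => exact fun _ hx => Or.inl hx
      | @cons x y u hadj q ih =>
        intro hsup hx
        by_cases hyu : y = u
        · subst hyu
          obtain ⟨s, hxs, hus⟩ := hedge hadj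
          have h2 : Anc T r (top v) s := anc_trans hT hx (anc_top x s hxs)
          have h3 : Anc T r (top y) s := anc_top y s hus
          rcases anc_total hT h2 h3 with h4 | h4
          · exact Or.inl h4
          · right
            obtain ⟨P, hP, hPl⟩ := exists_path_length_dist hT (top y) s
            have hmem : (top v) ∈ P.support := by
              rw [tree_mem_support_iff hT P hP]
              unfold Anc at h2 h3 h4
              omega
            exact hcoh y _ _ (htop1 y) hus P hP _ hmem
        · have hy : y ∈ (Walk.cons hadj q).support := by
            rw [support_cons]
            exact List.mem_cons_of_mem _ q.start_mem_support
          have hDy : D v ≤ D y := hsup y hy hyu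
          obtain ⟨s, hxs, hys⟩ := hedge hadj
          have h2 : Anc T r (top v) s := anc_trans hT hx (anc_top x s hxs)
          have h3 : Anc T r (top y) s := anc_top y s hys
          have hsup' : ∀ w ∈ q.support, w ≠ u → D v ≤ D w := by
            intro w hw hwu
            exact hsup w (by rw [support_cons]; exact List.mem_cons_of_mem _ hw) hwu
          rcases anc_total hT h2 h3 with h4 | h4
          · exact ih hsup' h4
          · have heq : top y = top v := anc_eq_of_depth_le hT h4 hDy
            exact ih hsup' (heq ▸ anc_refl T hT r (top y))
    have hsup0 : ∀ w ∈ p.support, w ≠ u → D v ≤ D w := by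
      intro w hw hwu
      by_cases hwv : w = v
      · exact hwv ▸ le_refl _
      · exact hDle v w (le_of_lt (hint w hw hwv hwu))
    rcases key v u p hsup0 (anc_refl T hT r (top v)) with h5 | h5
    · have : top v = top u := anc_eq_of_depth_le hT h5 hDu
      exact this ▸ htop1 u
    · exact h5
  calc (SReach G L n v).ncard ≤ (bag (top v)).ncard :=
        Set.ncard_le_ncard hsub (Set.toFinite _)
    _ ≤ k + 1 := hw (top v)

end Dir2
section Dir1
open Walk
variable {V : Type*}

lemma treewidth_le_of_order [Fintype V] [Nonempty V] (G : SimpleGraph V) (L : V ↪ ℕ) (k : ℕ)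
    (hb : ∀ v, (SReach G L (Fintype.card V) v).ncard ≤ k) (hk : 1 ≤ k) :
    HasTreewidthLE G (k - 1) := by
  classical
  set n := Fintype.card V with hn
  have hself : ∀ v, v ∈ SReach G L n v := by
    intro v
    refine ⟨Walk.nil, IsPath.nil, by simp, le_rfl, ?_⟩
    intro w hw h1 h2
    simp only [support_nil, List.mem_singleton] at hw
    exact absurd hw h1
  have mem_of_path : ∀ {v u : V} (p : G.Walk v u), p.IsPath → L u ≤ L v →
      (∀ w ∈ p.support, w ≠ v → w ≠ u → L v < L w) → u ∈ SReach G L n v := by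
    intro v u p hp h2 h3
    exact ⟨p, hp, le_of_lt hp.length_lt, h2, h3⟩
  obtain ⟨v₀, hv₀⟩ : ∃ v₀ : V, ∀ v, L v₀ ≤ L v := by
    obtain ⟨v₀, _, h⟩ := Finset.exists_min_image Finset.univ (fun v => L v)
      ⟨Classical.arbitrary V, Finset.mem_univ _⟩
    exact ⟨v₀, fun v => h v (Finset.mem_univ v)⟩
  set A : V → Set V := fun v => SReach G L n v \ {v} with hA
  have hA_lt : ∀ {v u : V}, u ∈ A v → L u < L v := by
    rintro v u ⟨⟨p, hp, hl, hLu, hint⟩, hne⟩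
    simp only [Set.mem_singleton_iff] at hne
    exact lt_of_le_of_ne hLu (fun h => hne (L.injective h))
  have hA_v₀ : ¬ (A v₀).Nonempty := by
    rintro ⟨u, hu⟩
    exact absurd (hv₀ u) (not_le.mpr (hA_lt hu))
  have hpar : ∀ v, ∃ u, (¬(A v).Nonempty ∧ u = v₀) ∨
      (u ∈ A v ∧ ∀ w ∈ A v, L w ≤ L u) := by
    intro v
    by_cases h : (A v).Nonempty
    · obtain ⟨u, hu, hmax⟩ := Set.exists_max_image (A v) (fun w => L w) (Set.toFinite _) h
      exact ⟨u, Or.inr ⟨hu, hmax⟩⟩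
    · exact ⟨v₀, Or.inl ⟨h, rfl⟩⟩
  choose parent hparent using hpar
  have hpv₀ : parent v₀ = v₀ := by
    rcases hparent v₀ with ⟨_, h⟩ | ⟨h, _⟩
    · exact h
    · exact absurd ⟨_, h⟩ hA_v₀
  have hpmax : ∀ v, (A v).Nonempty → parent v ∈ A v ∧ ∀ w ∈ A v, L w ≤ L (parent v) := by
    intro v hv
    rcases hparent v with ⟨h, _⟩ | ⟨h1, h2⟩
    · exact absurd hv h
    · exact ⟨h1, h2⟩
  have hplt : ∀ v, v ≠ v₀ → L (parent v) < L v := by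
    intro v hv
    rcases hparent v with ⟨_, h⟩ | ⟨h1, _⟩
    · rw [h]
      exact lt_of_le_of_ne (hv₀ v) (fun hh => hv (L.injective hh).symm)
    · exact hA_lt h1
  -- the key elimination-step lemma
  have step : ∀ v w, w ∈ SReach G L n v → w ≠ v → w ∈ SReach G L n (parent v) := by
    intro v w hw hne
    have hwA : w ∈ A v := ⟨hw, hne⟩
    obtain ⟨hpA, hmax⟩ := hpmax v ⟨w, hwA⟩
    by_cases hwu : w = parent v
    · exact hwu ▸ hself (parent v)
    have hulv : L (parent v) < L v := hA_lt hpA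
    obtain ⟨p, hp, _, hLw, hintp⟩ := hw
    obtain ⟨q, hq, _, hLu, hintq⟩ := hpA.1
    set W : G.Walk (parent v) w := q.reverse.append p with hW
    refine mem_of_path W.bypass (bypass_isPath W) (hmax w hwA) ?_
    intro x hx hxu hxw
    have hxW : x ∈ W.support := support_bypass_subset W hx
    rw [hW, mem_support_append_iff] at hxW
    by_cases hxv : x = v
    · exact hxv ▸ hulv
    rcases hxW with hx1 | hx1
    · rw [support_reverse, List.mem_reverse] at hx1
      exact lt_trans hulv (hintq x hx1 hxv hxu)
    · exact lt_trans hulv (hintp x hx1 hxv hxw)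
  -- set up the tree on Fin n
  have hn1 : 1 ≤ n := Fintype.card_pos
  set e : V ≃ Fin n := Fintype.equivFin V with he
  set par : Fin n → Fin n := fun i => e (parent (e.symm i)) with hparfin
  set ℓ : Fin n → ℕ := fun i => L (e.symm i) with hℓ
  have hb₀ : par (e v₀) = e v₀ := by simp [hparfin, hpv₀]
  have hparlt : ∀ b, b ≠ e v₀ → ℓ (par b) < ℓ b := by
    intro b hb
    have : e.symm b ≠ v₀ := fun h => hb (by rw [← h, e.apply_symm_apply])
    simpa [hℓ, hparfin] using hplt (e.symm b) this
  have hTree : (parTree par).IsTree := parTree_isTree par ℓ (e v₀) hb₀ hparlt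
  set bag : Fin n → Set V := fun i => SReach G L n (e.symm i) with hbag
  refine ⟨Fin n, parTree par, bag, ⟨hTree, ?_, ?_, ?_⟩, ?_⟩
  · intro v
    exact ⟨e v, by simp [hbag, hself]⟩
  · intro u v hadj
    have hne : L u ≠ L v := fun h => hadj.ne (L.injective h)
    have key : ∀ a b : V, G.Adj a b → L b < L a → b ∈ SReach G L n a := by
      intro a b hab hlt
      refine mem_of_path (Walk.cons hab Walk.nil) ?_ (le_of_lt hlt) ?_
      · rw [cons_isPath_iff]
        exact ⟨IsPath.nil, by simpa using hab.ne⟩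
      · intro w hw h1 h2
        simp only [support_cons, support_nil, List.mem_cons, List.not_mem_nil, or_false] at hw
        rcases hw with h | h
        · exact absurd h h1
        · exact absurd h h2
    rcases lt_or_gt_of_ne hne with h | h
    · exact ⟨e v, by simp [hbag]; exact ⟨key v u hadj.symm h, hself v⟩⟩
    · exact ⟨e u, by simp [hbag]; exact ⟨hself u, key u v hadj h⟩⟩
  · -- coherence
    intro w t₁ t₂ h1 h2 p hp t ht
    have walkS : ∀ m (i : Fin n), w ∈ bag i → ℓ i ≤ m →
        ∃ q : (parTree par).Walk i (e w), ∀ x ∈ q.support, w ∈ bag x := by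
      intro m
      induction m with
      | zero =>
        intro i hi hli
        by_cases h : e.symm i = w
        · have : i = e w := by rw [← h, e.apply_symm_apply]
          subst this
          exact ⟨Walk.nil, by
            intro x hx
            simp only [support_nil, List.mem_singleton] at hx
            exact hx ▸ hi⟩
        · exfalso
          have hwA : w ∈ A (e.symm i) := ⟨hi, fun hh => h (by rw [hh])⟩
          have hiv₀ : i ≠ e v₀ := by
            intro hh
            apply hA_v₀
            rw [hh] at hwA
            simp only [e.symm_apply_apply] at hwA
            exact ⟨w, hwA⟩
          have := hparlt i hiv₀
          omega
      | succ m ih =>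
        intro i hi hli
        by_cases h : e.symm i = w
        · have : i = e w := by rw [← h, e.apply_symm_apply]
          subst this
          exact ⟨Walk.nil, by
            intro x hx
            simp only [support_nil, List.mem_singleton] at hx
            exact hx ▸ hi⟩
        · have hwA : w ∈ A (e.symm i) := ⟨hi, fun hh => h (by rw [hh])⟩
          have hiv₀ : i ≠ e v₀ := by
            intro hh
            apply hA_v₀
            rw [hh] at hwA
            simp only [e.symm_apply_apply] at hwA
            exact ⟨w, hwA⟩
          have hlt := hparlt i hiv₀
          have hstep : w ∈ bag (par i) := by
            have := step (e.symm i) w hi (fun hh => h hh.symm)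
            simpa [hbag, hparfin] using this
          have hadjT : (parTree par).Adj i (par i) := by
            refine (parTree_adj_parent par ?_).symm.symm
            intro hh
            rw [hh] at hlt
            omega
          obtain ⟨q', hq'⟩ := ih (par i) hstep (by omega)
          refine ⟨Walk.cons hadjT q', ?_⟩
          intro x hx
          rw [support_cons] at hx
          rcases List.mem_cons.mp hx with hx | hx
          · exact hx ▸ hi
          · exact hq' x hx
    obtain ⟨q₁, hq₁⟩ := walkS (ℓ t₁) t₁ h1 le_rfl
    obtain ⟨q₂, hq₂⟩ := walkS (ℓ t₂) t₂ h2 le_rfl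
    set W : (parTree par).Walk t₁ t₂ := q₁.append q₂.reverse with hWdef
    have hWs : ∀ x ∈ W.support, w ∈ bag x := by
      intro x hx
      rw [hWdef, mem_support_append_iff] at hx
      rcases hx with hx | hx
      · exact hq₁ x hx
      · rw [support_reverse, List.mem_reverse] at hx
        exact hq₂ x hx
    have huniq := hTree.IsAcyclic.path_unique ⟨p, hp⟩ ⟨W.bypass, bypass_isPath W⟩
    have hpW : p = W.bypass := congrArg Subtype.val huniq
    exact hWs t (support_bypass_subset W (hpW ▸ ht))
  · intro i
    have := hb (e.symm i)
    have h2 : k - 1 + 1 = k := by omega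
    rw [h2]
    exact this
end Dir1

section Glue
open Walk
variable {V : Type*}

lemma mem_SReach_self' (G : SimpleGraph V) (L : V ↪ ℕ) (r : ℕ) (v : V) :
    v ∈ SReach G L r v := by
  refine ⟨Walk.nil, IsPath.nil, by simp, le_rfl, ?_⟩
  intro w hw h1 _
  simp only [support_nil, List.mem_singleton] at hw
  exact absurd hw h1

end Glue

/-- col_n(G) = tw(G) + 1 for an n-vertex graph G. -/
theorem col_card_eq_treewidth_add_one [Fintype V] [Nonempty V] (G : SimpleGraph V) :
    gcol G (Fintype.card V) = treewidth G + 1 := by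
  classical
  set n := Fintype.card V with hn
  have hn1 : 1 ≤ n := Fintype.card_pos
  have hgcol : gcol G n = sInf {k | ∃ L : V ↪ ℕ, ∀ v, (SReach G L n v).ncard ≤ k} := rfl
  have htw : treewidth G = sInf {k | HasTreewidthLE G k} := rfl
  have hSgne : {k | ∃ L : V ↪ ℕ, ∀ v, (SReach G L n v).ncard ≤ k}.Nonempty := by
    refine ⟨n, (Fintype.equivFin V).toEmbedding.trans (Fin.valEmbedding), fun v => ?_⟩
    calc (SReach G _ n v).ncard ≤ (Set.univ : Set V).ncard :=
          Set.ncard_le_ncard (Set.subset_univ _) (Set.toFinite _)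
      _ = n := by rw [Set.ncard_univ, Nat.card_eq_fintype_card]
  have hg_mem : gcol G n ∈ {k | ∃ L : V ↪ ℕ, ∀ v, (SReach G L n v).ncard ≤ k} := by
    rw [hgcol]; exact Nat.sInf_mem hSgne
  obtain ⟨Lg, hLg⟩ := hg_mem
  have hg1 : 1 ≤ gcol G n := by
    have h1 := hLg (Classical.arbitrary V)
    have h2 : 0 < (SReach G Lg n (Classical.arbitrary V)).ncard :=
      (Set.ncard_pos (Set.toFinite _)).mpr ⟨_, mem_SReach_self' G Lg n (Classical.arbitrary V)⟩
    omega
  have hTWne : {k | HasTreewidthLE G k}.Nonempty := by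
    refine ⟨n - 1, Unit, ⊥, fun _ => Set.univ, ⟨⟨⟨fun a b => by
        rw [Subsingleton.elim a b]⟩, isAcyclic_bot⟩, fun v => ⟨(), trivial⟩,
        fun u v _ => ⟨(), trivial, trivial⟩, fun v t₁ t₂ _ _ p _ t _ => trivial⟩, ?_⟩
    intro t
    show (Set.univ : Set V).ncard ≤ n - 1 + 1
    rw [Set.ncard_univ, Nat.card_eq_fintype_card]
    omega
  have htw_mem : HasTreewidthLE G (treewidth G) := by
    have := Nat.sInf_mem hTWne
    rwa [← htw] at this
  obtain ⟨L2, hL2⟩ := gcol_le_of_decomp G (treewidth G) htw_mem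
  have h1 : gcol G n ≤ treewidth G + 1 := by
    rw [hgcol]
    exact Nat.sInf_le ⟨L2, hL2⟩
  have h2 : treewidth G ≤ gcol G n - 1 := by
    rw [htw]
    exact Nat.sInf_le (treewidth_le_of_order G Lg (gcol G n) hLg hg1)
  omega
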